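/- Let E be a real normed vector space, C ⊆ E a nonempty compact convex set, f : E → ℝ convex on C, Δ : E → E → ℝ, and C_f ≥ 0 a constant such that Δ satisfies the curvature bound C_f for f on C. Let x* ∈ C be a minimizer of f over C, let ε ≥ 0, and consider the agnostic schedule a_t = 2(t+1), A_t = (t+1)(t+2), α_t = 2/(t+2). Let x, v : ℕ → E satisfy: x_0 ∈ C; for every t, v_t ∈ C satisfies the heavy ball oracle condition ∑_{i=0}^t a_i·Δ x_i (α_i·(v_t − x_i))/α_i ≤ ∑_{i=0}^t a_i·Δ x_i (α_i·(w − x_i))/α_i + ε·a_t·α_t·C_f for all w ∈ C; and x_{t+1} = (1 − α_t)·x_t + α_t·v_t. Then for every t ∈ ℕ, f(x_{t+1}) − f(x*) ≤ 4·C_f·(1 + ε)/(t + 2). -/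

import Mathlib

set_option maxHeartbeats 1000000 in
/-- Primal-dual convergence for heavy ball ASFW: with the agnostic schedule
`a t = 2(t+1)`, `A t = (t+1)(t+2)`, `α t = 2/(t+2)`, and the inexact heavy ball
oracle, the iterates satisfy `f (x (t+1)) - f xs ≤ 4 * Cf * (1 + ε) / (t + 2)`. -/
theorem heavy_ball_asfw_primal_dual_convergence
    {E : Type*} [NormedAddCommGroup E] [NormedSpace ℝ E]
    (C : Set E) (hCne : C.Nonempty) (hCcomp : IsCompact C) (hCconv : Convex ℝ C)
    (f : E → ℝ) (hf : ConvexOn ℝ C f)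
    (Δ : E → E → ℝ) (Cf : ℝ) (hCf : 0 ≤ Cf)
    (hcurv : ∀ x ∈ C, ∀ v ∈ C, ∀ α ∈ Set.Ioc (0:ℝ) 1,
      |f (x + α • (v - x)) - f x - Δ x (α • (v - x))| ≤ α ^ 2 / 2 * Cf)
    (xs : E) (hxs : xs ∈ C) (hmin : ∀ y ∈ C, f xs ≤ f y)
    (ε : ℝ) (hε : 0 ≤ ε)
    (a α : ℕ → ℝ)
    (ha : ∀ t : ℕ, a t = 2 * ((t : ℝ) + 1))
    (hα : ∀ t : ℕ, α t = 2 / ((t : ℝ) + 2))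
    (x v : ℕ → E) (hx0 : x 0 ∈ C) (hv : ∀ t, v t ∈ C)
    (horacle : ∀ t : ℕ, ∀ w ∈ C,
      ∑ i ∈ Finset.range (t + 1), a i * Δ (x i) (α i • (v t - x i)) / α i ≤
        (∑ i ∈ Finset.range (t + 1), a i * Δ (x i) (α i • (w - x i)) / α i) +
          ε * a t * α t * Cf)
    (hstep : ∀ t : ℕ, x (t + 1) = (1 - α t) • x t + α t • v t) :
    ∀ t : ℕ, f (x (t + 1)) - f xs ≤ 4 * Cf * (1 + ε) / ((t : ℝ) + 2) := by
  have ht2pos : ∀ t : ℕ, (0:ℝ) < (t:ℝ) + 2 := fun t => by positivity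
  have hαpos : ∀ t, 0 < α t := fun t => by rw [hα]; positivity
  have hα1 : ∀ t, α t ≤ 1 := fun t => by
    rw [hα, div_le_one (ht2pos t)]
    have : (0:ℝ) ≤ (t:ℝ) := Nat.cast_nonneg t
    linarith
  have hxC : ∀ t, x t ∈ C := by
    intro t
    induction t with
    | zero => exact hx0
    | succ t ih =>
      rw [hstep t]
      exact hCconv ih (hv t) (by linarith [hα1 t]) (le_of_lt (hαpos t)) (by ring)
  have hstep' : ∀ t, x (t+1) = x t + α t • (v t - x t) := by
    intro t; rw [hstep t]; module
  have hcurv' : ∀ i w, w ∈ C →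
      |f (x i + α i • (w - x i)) - f (x i) - Δ (x i) (α i • (w - x i))| ≤
        (α i) ^ 2 / 2 * Cf := by
    intro i w hw
    exact hcurv (x i) (hxC i) w hw (α i) ⟨hαpos i, hα1 i⟩
  have hdescent : ∀ t, f (x (t+1)) ≤
      f (x t) + Δ (x t) (α t • (v t - x t)) + (α t) ^ 2 / 2 * Cf := by
    intro t
    have h := abs_le.mp (hcurv' t (v t) (hv t))
    rw [← hstep' t] at h
    linarith [h.2]
  have hcomb : ∀ (i : ℕ) (w : E), x i + α i • (w - x i) = (1 - α i) • x i + α i • w := by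
    intro i w; module
  have hupper : ∀ i, ∀ w ∈ C,
      Δ (x i) (α i • (w - x i)) ≤ α i * (f w - f (x i)) + (α i) ^ 2 / 2 * Cf := by
    intro i w hw
    have h := abs_le.mp (hcurv' i w hw)
    have hconv := hf.2 (hxC i) hw (by linarith [hα1 i] : (0:ℝ) ≤ 1 - α i)
      (le_of_lt (hαpos i)) (by ring)
    rw [← hcomb i w] at hconv
    simp only [smul_eq_mul] at hconv
    have hr : (1 - α i) * f (x i) + α i * f w - f (x i) = α i * (f w - f (x i)) := by ring
    linarith [h.1]
  have hdiv : ∀ (i : ℕ) (d : ℝ), a i * d / α i = ((i:ℝ)+1)*((i:ℝ)+2) * d := by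
    intro i d
    rw [ha, hα]
    have := ht2pos i
    field_simp
  have hA : ∀ t : ℕ, (∑ i ∈ Finset.range (t+1), a i) = ((t:ℝ)+1)*((t:ℝ)+2) := by
    intro t
    induction t with
    | zero => simp [ha]
    | succ t ih =>
      rw [Finset.sum_range_succ, ih, ha]
      push_cast
      ring
  -- main inductive estimate
  have key : ∀ t : ℕ,
      ((t:ℝ)+1)*((t:ℝ)+2) * f (x (t+1)) ≤
        (∑ i ∈ Finset.range (t+1), a i * f (x i))
        + (∑ i ∈ Finset.range (t+1), a i * Δ (x i) (α i • (v t - x i)) / α i)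
        + (∑ i ∈ Finset.range (t+1), a i * α i / 2 * Cf)
        + ε * Cf * (∑ i ∈ Finset.range t, a i * α i) := by
    intro t
    induction t with
    | zero =>
      simp only [zero_add, Finset.sum_range_one, Finset.range_zero, Finset.sum_empty,
        mul_zero, add_zero, Nat.cast_zero]
      rw [hdiv 0]
      have hd := hdescent 0
      have h0 : α 0 = 1 := by rw [hα]; norm_num
      have ha0 : a 0 = 2 := by rw [ha]; norm_num
      rw [h0] at hd ⊢
      rw [ha0]
      norm_num at hd ⊢
      linarith
    | succ t ih =>
      have hd := hdescent (t+1)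
      set D := Δ (x (t+1)) (α (t+1) • (v (t+1) - x (t+1))) with hD
      have hAd : a (t+1) * D / α (t+1) = ((t:ℝ)+2)*((t:ℝ)+3) * D := by
        rw [hdiv (t+1)]; push_cast; ring
      have hAa : ((t:ℝ)+2)*((t:ℝ)+3) * ((α (t+1)) ^ 2 / 2 * Cf)
          = a (t+1) * α (t+1) / 2 * Cf := by
        rw [ha, hα]
        have h3 : ((t:ℝ)+1) + 2 ≠ 0 := by positivity
        push_cast
        field_simp
        ring
      have hd2 : ((t:ℝ)+2)*((t:ℝ)+3) * f (x (t+2)) ≤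
          ((t:ℝ)+2)*((t:ℝ)+3) * f (x (t+1)) + a (t+1) * D / α (t+1)
          + a (t+1) * α (t+1) / 2 * Cf := by
        have h1 := mul_le_mul_of_nonneg_left hd
          (by positivity : (0:ℝ) ≤ ((t:ℝ)+2)*((t:ℝ)+3))
        rw [hAd]
        nlinarith [hAa, h1]
      have hsplit : ((t:ℝ)+2)*((t:ℝ)+3) * f (x (t+1))
          = ((t:ℝ)+1)*((t:ℝ)+2) * f (x (t+1)) + a (t+1) * f (x (t+1)) := by
        rw [ha]; push_cast; ring
      have hor := horacle t (v (t+1)) (hv (t+1))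
      push_cast
      rw [show ((t:ℝ)+1)+1 = (t:ℝ)+2 by ring, show ((t:ℝ)+1)+2 = (t:ℝ)+3 by ring]
      rw [Finset.sum_range_succ (f := fun i => a i * f (x i)),
        Finset.sum_range_succ (f := fun i => a i * Δ (x i) (α i • (v (t+1) - x i)) / α i),
        Finset.sum_range_succ (f := fun i => a i * α i / 2 * Cf),
        Finset.sum_range_succ (f := fun i => a i * α i)]
      have hεnn : 0 ≤ ε * Cf := mul_nonneg hε hCf
      nlinarith [ih, hd2, hsplit, hor, hεnn]
  -- conclude
  intro t
  have hor := horacle t xs hxs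
  have hSxs : (∑ i ∈ Finset.range (t+1), a i * Δ (x i) (α i • (xs - x i)) / α i) ≤
      ∑ i ∈ Finset.range (t+1), (a i * (f xs - f (x i)) + a i * α i / 2 * Cf) := by
    refine Finset.sum_le_sum fun i _ => ?_
    rw [hdiv i]
    have hu := hupper i xs hxs
    have h1 : (0:ℝ) ≤ ((i:ℝ)+1)*((i:ℝ)+2) := by positivity
    have h2 := mul_le_mul_of_nonneg_left hu h1
    have he : ((i:ℝ)+1)*((i:ℝ)+2) * (α i * (f xs - f (x i)) + (α i) ^ 2 / 2 * Cf)
        = a i * (f xs - f (x i)) + a i * α i / 2 * Cf := by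
      rw [ha, hα]
      have := ht2pos i
      field_simp
    linarith
  have hsum_split : (∑ i ∈ Finset.range (t+1), (a i * (f xs - f (x i)) + a i * α i / 2 * Cf))
      = (∑ i ∈ Finset.range (t+1), a i) * f xs
        - (∑ i ∈ Finset.range (t+1), a i * f (x i))
        + (∑ i ∈ Finset.range (t+1), a i * α i) / 2 * Cf := by
    rw [Finset.sum_add_distrib]
    congr 1
    · rw [eq_sub_iff_add_eq, ← Finset.sum_add_distrib, Finset.sum_mul]
      refine Finset.sum_congr rfl fun i _ => by ring
    · rw [← Finset.sum_mul, ← Finset.sum_div]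
  have hQsplit : (∑ i ∈ Finset.range (t+1), a i * α i / 2 * Cf)
      = (∑ i ∈ Finset.range (t+1), a i * α i) / 2 * Cf := by
    rw [← Finset.sum_mul, ← Finset.sum_div]
  have hBsplit : (∑ i ∈ Finset.range (t+1), a i * α i)
      = (∑ i ∈ Finset.range t, a i * α i) + a t * α t := Finset.sum_range_succ _ _
  have hB : (∑ i ∈ Finset.range (t+1), a i * α i) ≤ 4*((t:ℝ)+1) := by
    calc (∑ i ∈ Finset.range (t+1), a i * α i)
        ≤ ∑ _i ∈ Finset.range (t+1), (4:ℝ) := by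
          refine Finset.sum_le_sum fun i _ => ?_
          rw [ha, hα,
            show (2*((i:ℝ)+1))*(2/((i:ℝ)+2)) = (4*((i:ℝ)+1))/((i:ℝ)+2) from by ring,
            div_le_iff₀ (ht2pos i)]
          have : (0:ℝ) ≤ (i:ℝ) := Nat.cast_nonneg i
          linarith
      _ = 4*((t:ℝ)+1) := by
          rw [Finset.sum_const, Finset.card_range, nsmul_eq_mul]
          push_cast; ring
  have hkey := key t
  rw [hA t] at hsum_split
  have hεnn : 0 ≤ (1 + ε) * Cf := by positivity
  have hRB : ε * Cf * (∑ i ∈ Finset.range t, a i * α i) + ε * a t * α t * Cf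
      = ε * Cf * (∑ i ∈ Finset.range (t+1), a i * α i) := by
    rw [hBsplit]; ring
  have hmul := mul_le_mul_of_nonneg_left hB hεnn
  have hfinal : ((t:ℝ)+1)*((t:ℝ)+2) * f (x (t+1)) ≤
      ((t:ℝ)+1)*((t:ℝ)+2) * f xs + (1+ε) * Cf * (4*((t:ℝ)+1)) := by
    linarith [hkey, hor, hSxs, hsum_split, hQsplit, hRB, hmul]
  rw [le_div_iff₀ (ht2pos t)]
  have ht1 : (0:ℝ) < (t:ℝ)+1 := by positivity
  have h := (mul_le_mul_iff_right₀ ht1).mp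
    (show ((t:ℝ)+1) * ((f (x (t+1)) - f xs) * ((t:ℝ)+2)) ≤ ((t:ℝ)+1) * (4*Cf*(1+ε)) by
      nlinarith [hfinal])
  nlinarith [h]
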